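/- Let R be a commutative ring in which 2 is a regular element (a non-zero-divisor) and in which every unit of the form 1 + 2a (a ∈ R) equals 1 or −1. Let a₂, a₄, a₂', a₄' ∈ R and suppose an admissible change of Weierstrass coordinates x = u²x' + r, y = u³y' + s·u²x' + t (u a unit, r, s, t ∈ R) transforms the curve y² + xy = x³ + a₂x² + a₄x into y² + x y = x³ + a₂'x² + a₄'x, and that it fixes the point (0,0), i.e. r = 0 and t = 0. Then a₂' = a₂ and a₄' = a₄, and the change of coordinates is either the identity (u = 1, s = 0) or the sign involution x = x', y = −y' − x' (u = −1, s = −1). -/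

import Mathlib

/-- The Weierstrass curve `y² + xy = x³ + a₂·x² + a₄·x` over a commutative ring `R`,
i.e. the Weierstrass curve with coefficients `(a₁, a₂, a₃, a₄, a₆) = (1, a₂, 0, a₄, 0)`. -/
def Wc {R : Type*} [CommRing R] (a₂ a₄ : R) : WeierstrassCurve R :=
  { a₁ := 1, a₂ := a₂, a₃ := 0, a₄ := a₄, a₆ := 0 }

/-- Let `R` be a commutative ring in which `2` is a regular element and in which every unit
of the form `1 + 2a` (`a ∈ R`) equals `1` or `−1`.  Suppose an admissible change of
Weierstrass coordinates `x = u²x' + r`, `y = u³y' + s·u²x' + t` transforms the curve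
`y² + xy = x³ + a₂x² + a₄x` into `y² + xy = x³ + a₂'x² + a₄'x`, and that it fixes the point
`(0,0)`, i.e. `r = 0` and `t = 0`.  Then `a₂' = a₂` and `a₄' = a₄`, and the change of
coordinates is either the identity (`u = 1, s = 0`) or the sign involution
`x = x', y = −y' − x'` (`u = −1, s = −1`). -/
theorem stmt_9 (R : Type*) [CommRing R] (h2 : IsRegular (2 : R))
    (hu : ∀ u : Rˣ, ∀ a : R, (u : R) = 1 + 2 * a → (u : R) = 1 ∨ (u : R) = -1)
    (a₂ a₄ a₂' a₄' : R) (C : WeierstrassCurve.VariableChange R)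
    (hr : C.r = 0) (ht : C.t = 0)
    (h : C • (Wc a₂ a₄) = Wc a₂' a₄') :
    a₂' = a₂ ∧ a₄' = a₄ ∧
      (C = ⟨1, 0, 0, 0⟩ ∨ C = ⟨-1, 0, -1, 0⟩) := by
  obtain ⟨u, r, s, t⟩ := C
  dsimp at hr ht; subst hr ht
  have h1 := congrArg WeierstrassCurve.a₁ h
  have h2' := congrArg WeierstrassCurve.a₂ h
  have h4 := congrArg WeierstrassCurve.a₄ h
  simp only [WeierstrassCurve.variableChange_a₁, WeierstrassCurve.variableChange_a₂,
    WeierstrassCurve.variableChange_a₄, Wc] at h1 h2' h4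
  have key : (u : R) = 1 + 2 * s := by
    have := congrArg (fun x => (u : R) * x) h1
    simpa [mul_comm, mul_assoc, mul_left_comm, ← Units.val_mul] using this.symm
  rcases hu u s key with h1' | h1'
  · have hs : s = 0 := by
      have h20 : 2 * s = 2 * 0 := by linear_combination h1' - key
      exact h2.left h20
    subst hs
    have hU : u = 1 := Units.ext h1'
    subst hU
    simp only [inv_one, Units.val_one, one_pow, one_mul] at h2' h4
    exact ⟨by linear_combination -h2', by linear_combination -h4, Or.inl rfl⟩
  · have hs : s = -1 := by
      have h20 : 2 * s = 2 * (-1) := by linear_combination h1' - key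
      exact h2.left h20
    subst hs
    have hU : u = -1 := Units.ext (by simpa using h1')
    subst hU
    have hinv : ((((-1 : Rˣ))⁻¹ : Rˣ) : R) = -1 := by simp
    rw [hinv] at h2' h4
    exact ⟨by linear_combination -h2', by linear_combination -h4, Or.inr rfl⟩
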